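/- Suppose the naive primal-dual maximum-weight matching algorithm is run on a bipartite graph with all edge weights integer multiples of a fixed α > 0, starting from the potential π(v) = max edge weight for v ∈ L and π(v) = 0 for v ∈ R. Then throughout the execution every potential value π(v) is a nonnegative integer multiple of α, and each dual adjustment strictly decreases the total potential Σ_v π(v) by at least α; hence the algorithm terminates. -/
import Mathlib


open Finset

def IsGraph {V : Type*} (G : Finset (Finset V)) : Prop := ∀ e ∈ G, e.card = 2

open scoped Classical in
/-- `Γ_π(S)`: the vertices outside `S` joined to a vertex of `S` by a tight edge. -/
noncomputable def tightNbhd {V : Type*} [DecidableEq V]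
    (G : Finset (Finset V)) (w : Finset V → ℝ) (π : V → ℝ) (S : Finset V) : Finset V :=
  (G.biUnion id).filter
    (fun v => v ∉ S ∧ ∃ e ∈ G, v ∈ e ∧ (∑ x ∈ e, π x) = w e ∧ ∃ u ∈ e, u ∈ S)

private lemma sub_multiple {α a b : ℝ} (hα : 0 < α) (k j : ℕ)
    (ha : a = k * α) (hb : b = j * α) (hab : 0 ≤ a - b) :
    ∃ m : ℕ, a - b = m * α := by
  subst ha hb
  have hjk : j ≤ k := by
    by_contra h
    push_neg at h
    have : (k : ℝ) * α < (j : ℝ) * α := by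
      apply mul_lt_mul_of_pos_right _ hα
      exact_mod_cast h
    linarith
  exact ⟨k - j, by push_cast [hjk]; ring⟩

/-- **Termination invariant of the naive primal-dual algorithm.** If all weights are
integer multiples of `α > 0` and all potential values are nonnegative integer multiples
of `α`, then a dual adjustment step (on a deficient set `X` of positive-potential
vertices, with `ε` the minimum of the positive slacks leaving `X` and the potentials
on `X`) again yields potentials that are nonnegative integer multiples of `α`, and
strictly decreases the total potential by at least `α`; hence the algorithm terminates. -/
theorem naive_pd_adjustment_multiples_and_decrease
    {V : Type*} [DecidableEq V]
    (G : Finset (Finset V)) (hG : IsGraph G) (L R : Finset V)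
    (hLR : Disjoint L R)
    (hbip : ∀ e ∈ G, ∃ u ∈ L, ∃ v ∈ R, e = {u, v})
    (w : Finset V → ℝ) (α : ℝ) (hα : 0 < α)
    (hw : ∀ e ∈ G, ∃ k : ℕ, w e = k * α)
    (π : V → ℝ)
    (hfeas_edge : ∀ e ∈ G, w e ≤ ∑ v ∈ e, π v)
    (hmult : ∀ v, ∃ k : ℕ, π v = k * α)
    (X : Finset V) (hXV : X ⊆ G.biUnion id)
    (hXside : X ⊆ L ∨ X ⊆ R)
    (hXpos : ∀ v ∈ X, 0 < π v)
    (hdef : (tightNbhd G w π X).card < X.card)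
    (ε : ℝ)
    (hε : IsLeast
      {r : ℝ |
        (∃ e ∈ G, (∃ u ∈ e, u ∈ X) ∧ (∃ v ∈ e, v ∉ X ∧ v ∉ tightNbhd G w π X) ∧
          r = (∑ x ∈ e, π x) - w e ∧ 0 < r) ∨
        (∃ v ∈ X, r = π v)} ε)
    (π' : V → ℝ)
    (hπ' : ∀ v, π' v =
      if v ∈ X then π v - ε else if v ∈ tightNbhd G w π X then π v + ε else π v) :
    (∀ v, ∃ k : ℕ, π' v = k * α) ∧
      ∑ v ∈ G.biUnion id, π' v ≤ (∑ v ∈ G.biUnion id, π v) - α := by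
  classical
  set Γ := tightNbhd G w π X with hΓ
  -- ε is a positive multiple of α
  obtain ⟨m, hm⟩ : ∃ m : ℕ, ε = m * α := by
    rcases hε.1 with ⟨e, he, _, _, hεeq, hεpos⟩ | ⟨v, hv, hεeq⟩
    · obtain ⟨j, hj⟩ := hw e he
      have hsum : ∃ k : ℕ, (∑ x ∈ e, π x) = k * α := by
        refine ⟨∑ x ∈ e, Classical.choose (hmult x), ?_⟩
        push_cast
        rw [Finset.sum_mul]
        exact Finset.sum_congr rfl fun x _ => Classical.choose_spec (hmult x)
      obtain ⟨k, hk⟩ := hsum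
      obtain ⟨n, hn⟩ := sub_multiple hα k j hk hj (by linarith)
      exact ⟨n, by rw [hεeq, hn]⟩
    · obtain ⟨k, hk⟩ := hmult v
      exact ⟨k, by rw [hεeq, hk]⟩
  have hεpos : 0 < ε := by
    rcases hε.1 with ⟨e, he, _, _, hεeq, hεpos⟩ | ⟨v, hv, hεeq⟩
    · exact hεpos
    · rw [hεeq]; exact hXpos v hv
  have hεα : α ≤ ε := by
    have hm1 : 1 ≤ m := by
      rcases Nat.eq_zero_or_pos m with h | h
      · simp [h] at hm; linarith
      · exact h
    calc α = 1 * α := by ring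
    _ ≤ m * α := by
        apply mul_le_mul_of_nonneg_right _ hα.le
        exact_mod_cast hm1
    _ = ε := hm.symm
  have hεle : ∀ v ∈ X, ε ≤ π v := fun v hv => hε.2 (Or.inr ⟨v, hv, rfl⟩)
  -- X and Γ are disjoint
  have hXΓ : ∀ v, v ∈ X → v ∉ Γ := by
    intro v hv hvΓ
    rw [hΓ, tightNbhd, Finset.mem_filter] at hvΓ
    exact hvΓ.2.1 hv
  have hΓsub : Γ ⊆ G.biUnion id := Finset.filter_subset _ _
  constructor
  · intro v
    rw [hπ' v]
    obtain ⟨k, hk⟩ := hmult v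
    by_cases hvX : v ∈ X
    · simp only [hvX, if_true]
      exact sub_multiple hα k m hk hm (by have := hεle v hvX; linarith)
    · by_cases hvΓ : v ∈ Γ
      · simp only [hvX, if_false, hvΓ, if_true]
        exact ⟨k + m, by rw [hk, hm]; push_cast; ring⟩
      · simp only [hvX, if_false, hvΓ, if_false]
        exact ⟨k, hk⟩
  · have hsum : ∑ v ∈ G.biUnion id, π' v
        = (∑ v ∈ G.biUnion id, π v) - ε * X.card + ε * Γ.card := by
      have : ∀ v ∈ G.biUnion id, π' v
          = π v + ((if v ∈ X then -ε else 0) + (if v ∈ Γ then ε else 0)) := by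
        intro v _
        rw [hπ' v]
        by_cases hvX : v ∈ X
        · simp [hvX, hXΓ v hvX]; ring
        · by_cases hvΓ : v ∈ Γ <;> simp [hvX, hvΓ]
      rw [Finset.sum_congr rfl this, Finset.sum_add_distrib, Finset.sum_add_distrib,
        Finset.sum_ite_mem, Finset.sum_ite_mem,
        Finset.inter_eq_right.mpr hXV, Finset.inter_eq_right.mpr hΓsub,
        Finset.sum_const, Finset.sum_const]
      simp [nsmul_eq_mul]
      ring
    rw [hsum]
    have hcard : (Γ.card : ℝ) + 1 ≤ X.card := by exact_mod_cast hdef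
    nlinarith [hεα, hεpos]
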